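/- Let F be a binary form of degree d ≥ 3 over ℂ that is a direct sum, i.e. F = c_1 ℓ_1^d + c_2 ℓ_2^d with c_1, c_2 nonzero scalars and ℓ_1, ℓ_2 linearly independent linear forms. Then the decomposition is uniquely determined: if also F = c_1' m_1^d + c_2' m_2^d with c_1', c_2' nonzero and m_1, m_2 linearly independent linear forms, then the unordered pair of lines {⟨ℓ_1⟩, ⟨ℓ_2⟩} equals {⟨m_1⟩, ⟨m_2⟩}. -/

import Mathlib

/-!
Apolarity setup.  `S = ℂ[x_1,…,x_n]` and its dual ring `T = ℂ[α_1,…,α_n]` are both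
realized as `MvPolynomial (Fin n) ℂ`; the apolarity action `Θ ⌟ F` (`contract Θ F`)
lets `α_i` act as the partial differentiation operator `∂/∂x_i`.
-/

open MvPolynomial

noncomputable section Apolarity

/-- Partial derivatives on `ℂ[x_1,…,x_n]` commute. -/
lemma pderiv_pderiv_comm (n : ℕ) (i j : Fin n) (f : MvPolynomial (Fin n) ℂ) :
    pderiv i (pderiv j f) = pderiv j (pderiv i f) := by
  induction f using MvPolynomial.induction_on with
  | C a => simp
  | add p q hp hq => simp [hp, hq]
  | mul_X p k hp =>
    rcases eq_or_ne i k with rfl | hik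
    · rcases eq_or_ne j i with rfl | hjk
      · rfl
      · simp only [pderiv_mul, pderiv_X_self, pderiv_X_of_ne hjk, pderiv_X_of_ne hjk.symm,
          map_add, map_zero, map_one, Derivation.map_one_eq_zero, mul_one, mul_zero,
          add_zero, zero_add, hp]
    · rcases eq_or_ne j k with rfl | hjk
      · simp only [pderiv_mul, pderiv_X_self, pderiv_X_of_ne hik, pderiv_X_of_ne hik.symm,
          map_add, map_zero, map_one, Derivation.map_one_eq_zero, mul_one, mul_zero,
          add_zero, zero_add, hp]
      · simp only [pderiv_mul, pderiv_X_of_ne hik.symm, pderiv_X_of_ne hjk.symm, map_add,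
          map_zero, mul_zero, add_zero, zero_add, hp]

variable (n : ℕ)

/-- The endomorphism `∂/∂x_i` of `S = ℂ[x_1,…,x_n]`. -/
def derOp (i : Fin n) : Module.End ℂ (MvPolynomial (Fin n) ℂ) :=
  (pderiv i).toLinearMap

lemma derOp_commute (i j : Fin n) : Commute (derOp n i) (derOp n j) :=
  LinearMap.ext fun f => pderiv_pderiv_comm n i j f

/-- The commuting product of the operators `(∂/∂x_i)^(m i)`. -/
def piDiffHom : (Fin n → Multiplicative ℕ) →* Module.End ℂ (MvPolynomial (Fin n) ℂ) :=
  MonoidHom.noncommPiCoprod (fun i : Fin n => powersHom _ (derOp n i))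
    (fun i j _ x y => ((derOp_commute n i j).pow_pow x y))

/-- The differential operator `∏ i, (∂/∂x_i)^(m i)` attached to an exponent vector `m`. -/
def diffMonoidHom : Multiplicative (Fin n →₀ ℕ) →* Module.End ℂ (MvPolynomial (Fin n) ℂ) :=
  (piDiffHom n).comp
    (AddMonoidHom.toMultiplicative
      (Finsupp.coeFnAddHom : (Fin n →₀ ℕ) →+ (Fin n → ℕ)))

/-- The apolarity action of the dual ring `T = ℂ[α_1,…,α_n]` on `S = ℂ[x_1,…,x_n]`, as an
algebra homomorphism to differential operators: `α_i` acts as `∂/∂x_i`. -/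
def apolarAlgHom :
    MvPolynomial (Fin n) ℂ →ₐ[ℂ] Module.End ℂ (MvPolynomial (Fin n) ℂ) :=
  AddMonoidAlgebra.lift ℂ _ (Fin n →₀ ℕ) (diffMonoidHom n)

variable {n}

/-- The apolarity action `Θ ⌟ F`: apply to `F` the differential operator obtained from `Θ`
by substituting `∂/∂x_i` for the `i`-th (dual) variable. -/
def contract (Θ F : MvPolynomial (Fin n) ℂ) : MvPolynomial (Fin n) ℂ :=
  apolarAlgHom n Θ F

lemma apolarAlgHom_X (i : Fin n) : apolarAlgHom n (X i) = derOp n i := by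
  classical
  have hX : (X i : MvPolynomial (Fin n) ℂ)
      = AddMonoidAlgebra.single (Finsupp.single i 1) (1 : ℂ) := rfl
  rw [hX]
  rw [show apolarAlgHom n (AddMonoidAlgebra.single (Finsupp.single i 1) (1:ℂ))
      = (1:ℂ) • diffMonoidHom n (Multiplicative.ofAdd (Finsupp.single i 1)) from
    AddMonoidAlgebra.lift_single _ _ _]
  rw [one_smul]
  rw [diffMonoidHom]
  have harg : (AddMonoidHom.toMultiplicative
        (Finsupp.coeFnAddHom : (Fin n →₀ ℕ) →+ (Fin n → ℕ)))
        (Multiplicative.ofAdd (Finsupp.single i 1))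
      = Pi.mulSingle (M := fun _ : Fin n => Multiplicative ℕ) i (Multiplicative.ofAdd 1) := by
    funext j
    rcases eq_or_ne j i with rfl | hj
    · show Multiplicative.ofAdd ((Finsupp.single j 1 : Fin n →₀ ℕ) j)
        = Pi.mulSingle (M := fun _ : Fin n => Multiplicative ℕ) j (Multiplicative.ofAdd 1) j
      rw [Finsupp.single_eq_same, Pi.mulSingle_eq_same]
    · show Multiplicative.ofAdd ((Finsupp.single i 1 : Fin n →₀ ℕ) j)
        = Pi.mulSingle (M := fun _ : Fin n => Multiplicative ℕ) i (Multiplicative.ofAdd 1) j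
      rw [Finsupp.single_eq_of_ne' (Ne.symm hj), Pi.mulSingle_eq_of_ne hj]
      exact ofAdd_zero
  refine (congrArg (piDiffHom n) harg).trans ?_
  rw [piDiffHom]
  erw [MonoidHom.noncommPiCoprod_mulSingle]
  rfl

/-- Sanity check: the dual variable `α_i` acts on `F` as `∂F/∂x_i`. -/
@[simp] lemma contract_X (i : Fin n) (F : MvPolynomial (Fin n) ℂ) :
    contract (X i) F = pderiv i F := by
  rw [contract, apolarAlgHom_X]; rfl

/-- The apolar (annihilator) ideal `F^⊥ = {Θ ∈ T : Θ ⌟ F = 0}` of a polynomial `F`. -/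
def apolarIdeal (F : MvPolynomial (Fin n) ℂ) : Ideal (MvPolynomial (Fin n) ℂ) where
  carrier := {Θ | contract Θ F = 0}
  zero_mem' := by simp [contract]
  add_mem' := by
    intro a b ha hb
    simp only [Set.mem_setOf_eq, contract, map_add, LinearMap.add_apply] at *
    rw [ha, hb, add_zero]
  smul_mem' := by
    intro c x hx
    simp only [Set.mem_setOf_eq, smul_eq_mul, contract, map_mul, Module.End.mul_apply] at *
    rw [hx, map_zero]

@[simp] lemma mem_apolarIdeal {Θ F : MvPolynomial (Fin n) ℂ} :
    Θ ∈ apolarIdeal F ↔ contract Θ F = 0 := Iff.rfl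

variable (n)

/-- The irrelevant maximal ideal `m = ⟨α_1,…,α_n⟩` of `T`. -/
def irrIdeal : Ideal (MvPolynomial (Fin n) ℂ) :=
  Ideal.span (Set.range X)

variable {n}

/-- The homogeneous ideal `I` has a minimal generator of degree `k`, i.e. `(I/mI)_k ≠ 0`:
there is a homogeneous element of `I` of degree `k` not belonging to `m * I`. -/
def HasMinGenOfDegree (I : Ideal (MvPolynomial (Fin n) ℂ)) (k : ℕ) : Prop :=
  ∃ Θ, Θ ∈ I ∧ Θ.IsHomogeneous k ∧ Θ ∉ irrIdeal n * I

/-- The homogeneous ideal `I` has at least `r` minimal generators of degree `k`, i.e.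
`dim_ℂ (I/mI)_k ≥ r`: there are `r` homogeneous degree-`k` elements of `I` that are
linearly independent modulo `m * I`. -/
def MinGensAtLeast (I : Ideal (MvPolynomial (Fin n) ℂ)) (k r : ℕ) : Prop :=
  ∃ Θ : Fin r → MvPolynomial (Fin n) ℂ,
    (∀ i, Θ i ∈ I ∧ (Θ i).IsHomogeneous k) ∧
    ∀ c : Fin r → ℂ, (∑ i, c i • Θ i) ∈ irrIdeal n * I → ∀ i, c i = 0

/-- `F` is an `s`-fold direct sum of degree `d`: `F = F_1 + ⋯ + F_s` where the `F_i` are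
nonzero degree-`d` forms in independent subspaces `V_i` of the space of linear forms with
`V = V_1 ⊕ ⋯ ⊕ V_s` (i.e. in disjoint sets of variables, up to linear change of variables;
`F_i ∈ S^d V_i` is expressed as membership in the subalgebra generated by `V_i`). -/
def IsSFoldDirectSum (F : MvPolynomial (Fin n) ℂ) (d s : ℕ) : Prop :=
  ∃ (V : Fin s → Submodule ℂ (MvPolynomial (Fin n) ℂ))
    (G : Fin s → MvPolynomial (Fin n) ℂ),
    (∀ i, V i ≤ homogeneousSubmodule (Fin n) ℂ 1) ∧
    iSupIndep V ∧
    (⨆ i, V i) = homogeneousSubmodule (Fin n) ℂ 1 ∧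
    (∀ i, G i ≠ 0 ∧ (G i).IsHomogeneous d ∧ G i ∈ Algebra.adjoin ℂ (V i : Set _)) ∧
    F = ∑ i, G i

/-- `F` is a direct sum: `F = F₁ + F₂` with `F₁ ∈ S^d V₁`, `F₂ ∈ S^d V₂` nonzero and
`V = V₁ ⊕ V₂`. -/
def IsDirectSum (F : MvPolynomial (Fin n) ℂ) (d : ℕ) : Prop :=
  IsSFoldDirectSum F d 2

/-- `F` is a limit (as `t → 0`) of `s`-fold direct sums of degree `d`. -/
def IsLimitOfSFoldDirectSums (F : MvPolynomial (Fin n) ℂ) (d s : ℕ) : Prop :=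
  ∃ G : ℂ → MvPolynomial (Fin n) ℂ,
    (∀ t : ℂ, t ≠ 0 → IsSFoldDirectSum (G t) d s) ∧
    ∀ m : Fin n →₀ ℕ,
      Filter.Tendsto (fun t => MvPolynomial.coeff m (G t))
        (nhdsWithin (0 : ℂ) {(0 : ℂ)}ᶜ) (nhds (MvPolynomial.coeff m F))

/-- `F` is a limit of direct sums. -/
def IsLimitOfDirectSums (F : MvPolynomial (Fin n) ℂ) (d : ℕ) : Prop :=
  IsLimitOfSFoldDirectSums F d 2

/-- `F` is concise: `(F^⊥)_1 = 0`, i.e. `F` cannot be written using fewer variables. -/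
def Concise (F : MvPolynomial (Fin n) ℂ) : Prop :=
  ∀ Θ : MvPolynomial (Fin n) ℂ, Θ.IsHomogeneous 1 → contract Θ F = 0 → Θ = 0

end Apolarity

noncomputable section AuxUnique
abbrev S2 := MvPolynomial (Fin 2) ℂ

def lin (a b : ℂ) : S2 := C a * X 0 + C b * X 1

lemma coeff_lin0 (a b : ℂ) : coeff (Finsupp.single 0 1) (lin a b) = a := by
  simp [lin, coeff_X', Finsupp.single_eq_single_iff]

lemma coeff_lin1 (a b : ℂ) : coeff (Finsupp.single 1 1) (lin a b) = b := by
  simp [lin, coeff_X', Finsupp.single_eq_single_iff]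

lemma lin_eq_zero_iff {a b : ℂ} : lin a b = 0 ↔ a = 0 ∧ b = 0 := by
  constructor
  · intro h
    constructor
    · have := coeff_lin0 a b; rw [h] at this; simpa using this.symm
    · have := coeff_lin1 a b; rw [h] at this; simpa using this.symm
  · rintro ⟨rfl, rfl⟩; simp [lin]

lemma rep {ℓ : S2} (h : ℓ.IsHomogeneous 1) :
    ℓ = lin (coeff (Finsupp.single 0 1) ℓ) (coeff (Finsupp.single 1 1) ℓ) := by
  apply MvPolynomial.ext
  intro m
  by_cases h0 : m = Finsupp.single 0 1
  · subst h0; rw [coeff_lin0]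
  by_cases h1 : m = Finsupp.single 1 1
  · subst h1; rw [coeff_lin1]
  have hdeg : m.degree ≠ 1 := by
    intro hm
    have hsum : m 0 + m 1 = 1 := by
      have : m.degree = ∑ i : Fin 2, m i := by
        rw [Finsupp.degree_apply, Finset.sum_subset (Finset.subset_univ _)]
        intro x _ hx
        exact Finsupp.notMem_support_iff.mp hx
      rw [this, Fin.sum_univ_two] at hm
      exact hm
    rcases Nat.eq_zero_or_pos (m 0) with hz | hp
    · apply h1; ext i
      fin_cases i <;> simp_all [Finsupp.single_apply] <;> omega
    · apply h0; ext i
      fin_cases i <;> simp_all [Finsupp.single_apply] <;> omega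
  rw [h.coeff_eq_zero hdeg]
  simp [lin, coeff_add, coeff_C_mul, coeff_X', Ne.symm h0, Ne.symm h1]

def Dop (u v : ℂ) : Derivation ℂ S2 S2 := u • pderiv 0 + v • pderiv 1

lemma Dop_lin (u v a b : ℂ) : Dop u v (lin a b) = C (u*a + v*b) := by
  simp [Dop, lin, smul_eq_C_mul, map_add, map_mul]
  ring

lemma Dapply (u v a b c : ℂ) (d : ℕ) :
    Dop u v (C c * (lin a b)^d) = C (c*(d:ℂ)*(u*a+v*b)) * (lin a b)^(d-1) := by
  rw [← smul_eq_C_mul, Derivation.map_smul, Derivation.leibniz_pow, Dop_lin]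
  rw [smul_eq_mul, nsmul_eq_mul, smul_eq_C_mul]
  rw [show ((d : S2)) = C ((d:ℕ):ℂ) by simp]
  rw [map_mul, map_mul]
  ring

lemma pow1 {a b c : ℂ} {d : ℕ} (hab : ¬(a = 0 ∧ b = 0))
    (h : C c * (lin a b)^d = 0) : c = 0 := by
  have hne : lin a b ≠ 0 := fun h0 => hab (lin_eq_zero_iff.mp h0)
  rcases mul_eq_zero.mp h with h' | h'
  · exact (MvPolynomial.C_eq_zero).mp h'
  · exact absurd (pow_eq_zero_iff'.mp h').1 hne

lemma pairL {a b a' b' : ℂ} (hδ : a*b' - b*a' ≠ 0) : ¬(a = 0 ∧ b = 0) := by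
  rintro ⟨rfl, rfl⟩; exact hδ (by ring)

lemma pairR {a b a' b' : ℂ} (hδ : a*b' - b*a' ≠ 0) : ¬(a' = 0 ∧ b' = 0) := by
  rintro ⟨rfl, rfl⟩; exact hδ (by ring)

lemma coeff_zero_of_facts {c : ℂ} {d : ℕ} (hd : 1 ≤ d) {δ : ℂ} (hδ : δ ≠ 0)
    (h : c * (d:ℂ) * δ = 0) : c = 0 := by
  have hd0 : (d:ℂ) ≠ 0 := Nat.cast_ne_zero.mpr (by omega)
  rcases mul_eq_zero.mp h with h' | h'
  · rcases mul_eq_zero.mp h' with h'' | h''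
    · exact h''
    · exact absurd h'' hd0
  · exact absurd h' hδ

lemma pow2 {d : ℕ} (hd : 1 ≤ d) {a1 b1 a2 b2 c1 c2 : ℂ}
    (h12 : a1*b2 - b1*a2 ≠ 0)
    (h : C c1 * (lin a1 b1)^d + C c2 * (lin a2 b2)^d = 0) :
    c1 = 0 ∧ c2 = 0 := by
  have h' := congrArg (Dop b1 (-a1)) h
  rw [map_add, Dapply, Dapply, map_zero] at h'
  rw [show c1*(d:ℂ)*(b1*a1 + -a1*b1) = 0 by ring, map_zero, zero_mul, zero_add] at h'
  have hc2 : c2 = 0 := by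
    have := pow1 (pairR h12) h'
    refine coeff_zero_of_facts hd (δ := b1*a2 + -a1*b2) ?_ this
    intro hz; exact h12 (by linear_combination -hz)
  refine ⟨?_, hc2⟩
  rw [hc2, map_zero, zero_mul, add_zero] at h
  exact pow1 (pairL h12) h

lemma pow3 {d : ℕ} (hd : 2 ≤ d) {a1 b1 a2 b2 a3 b3 c1 c2 c3 : ℂ}
    (h12 : a1*b2 - b1*a2 ≠ 0) (h13 : a1*b3 - b1*a3 ≠ 0) (h23 : a2*b3 - b2*a3 ≠ 0)
    (h : C c1 * (lin a1 b1)^d + C c2 * (lin a2 b2)^d + C c3 * (lin a3 b3)^d = 0) :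
    c1 = 0 ∧ c2 = 0 ∧ c3 = 0 := by
  have h' := congrArg (Dop b1 (-a1)) h
  rw [map_add, map_add, Dapply, Dapply, Dapply, map_zero] at h'
  rw [show c1*(d:ℂ)*(b1*a1 + -a1*b1) = 0 by ring, map_zero, zero_mul, zero_add] at h'
  have h2 := pow2 (by omega) h23 h'
  have hc2 : c2 = 0 := coeff_zero_of_facts (by omega) (δ := b1*a2 + -a1*b2)
    (fun hz => h12 (by linear_combination -hz)) h2.1
  have hc3 : c3 = 0 := coeff_zero_of_facts (by omega) (δ := b1*a3 + -a1*b3)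
    (fun hz => h13 (by linear_combination -hz)) h2.2
  refine ⟨?_, hc2, hc3⟩
  simp only [hc2, hc3, map_zero, zero_mul, add_zero] at h
  exact pow1 (pairL h12) h

lemma pow4 {d : ℕ} (hd : 3 ≤ d) {a1 b1 a2 b2 a3 b3 a4 b4 c1 c2 c3 c4 : ℂ}
    (h12 : a1*b2 - b1*a2 ≠ 0) (h13 : a1*b3 - b1*a3 ≠ 0) (h14 : a1*b4 - b1*a4 ≠ 0)
    (h23 : a2*b3 - b2*a3 ≠ 0) (h24 : a2*b4 - b2*a4 ≠ 0) (h34 : a3*b4 - b3*a4 ≠ 0)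
    (h : C c1 * (lin a1 b1)^d + C c2 * (lin a2 b2)^d + C c3 * (lin a3 b3)^d
        + C c4 * (lin a4 b4)^d = 0) :
    c1 = 0 ∧ c2 = 0 ∧ c3 = 0 ∧ c4 = 0 := by
  have h' := congrArg (Dop b1 (-a1)) h
  rw [map_add, map_add, map_add, Dapply, Dapply, Dapply, Dapply, map_zero] at h'
  rw [show c1*(d:ℂ)*(b1*a1 + -a1*b1) = 0 by ring, map_zero, zero_mul, zero_add] at h'
  have h2 := pow3 (by omega) h23 h24 h34 h'
  have hc2 : c2 = 0 := coeff_zero_of_facts (by omega) (δ := b1*a2 + -a1*b2)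
    (fun hz => h12 (by linear_combination -hz)) h2.1
  have hc3 : c3 = 0 := coeff_zero_of_facts (by omega) (δ := b1*a3 + -a1*b3)
    (fun hz => h13 (by linear_combination -hz)) h2.2.1
  have hc4 : c4 = 0 := coeff_zero_of_facts (by omega) (δ := b1*a4 + -a1*b4)
    (fun hz => h14 (by linear_combination -hz)) h2.2.2
  refine ⟨?_, hc2, hc3, hc4⟩
  simp only [hc2, hc3, hc4, map_zero, zero_mul, add_zero] at h
  exact pow1 (pairL h12) h

lemma rep' {ℓ : S2} (h : ℓ.IsHomogeneous 1) : ∃ a b : ℂ, ℓ = lin a b :=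
  ⟨_, _, rep h⟩

lemma lin_C_mul (c a b : ℂ) : lin (c*a) (c*b) = C c * lin a b := by
  simp [lin]; ring

lemma prop_of_det_zero {a1 b1 a2 b2 : ℂ} (h1 : ¬(a1 = 0 ∧ b1 = 0)) (h2 : ¬(a2 = 0 ∧ b2 = 0))
    (hδ : a1*b2 - b1*a2 = 0) : ∃ c : ℂ, c ≠ 0 ∧ a2 = c*a1 ∧ b2 = c*b1 := by
  by_cases ha : a1 = 0
  · have hb1 : b1 ≠ 0 := fun hb => h1 ⟨ha, hb⟩
    have ha2 : a2 = 0 := by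
      have : b1 * a2 = 0 := by linear_combination -hδ + b2 * ha
      exact (mul_eq_zero.mp this).resolve_left hb1
    have hb2 : b2 ≠ 0 := fun hb => h2 ⟨ha2, hb⟩
    exact ⟨b2 / b1, div_ne_zero hb2 hb1, by rw [ha2, ha, mul_zero], by field_simp⟩
  · refine ⟨a2 / a1, ?_, by field_simp, ?_⟩
    · intro hc
      have ha2 : a2 = 0 := by
        have := div_eq_zero_iff.mp hc
        tauto
      have hb2 : b2 = 0 := by
        have : a1 * b2 = 0 := by linear_combination hδ + b1 * ha2
        exact (mul_eq_zero.mp this).resolve_left ha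
      exact h2 ⟨ha2, hb2⟩
    · field_simp
      linear_combination hδ

lemma det_of_indep {a1 b1 a2 b2 : ℂ}
    (h : LinearIndependent ℂ ![lin a1 b1, lin a2 b2]) : a1*b2 - b1*a2 ≠ 0 := by
  intro hδ
  have h1 : ¬(a1 = 0 ∧ b1 = 0) := by
    have := h.ne_zero 0
    simp only [Matrix.cons_val_zero] at this
    exact fun hp => this (lin_eq_zero_iff.mpr hp)
  have h2 : ¬(a2 = 0 ∧ b2 = 0) := by
    have := h.ne_zero 1
    simp only [Matrix.cons_val_one, Matrix.head_cons] at this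
    exact fun hp => this (lin_eq_zero_iff.mpr hp)
  obtain ⟨c, hc, ha, hb⟩ := prop_of_det_zero h1 h2 hδ
  have key := (linearIndependent_fin2.mp h).2 c⁻¹
  apply key
  show c⁻¹ • (![lin a1 b1, lin a2 b2] 1) = _
  simp only [Matrix.cons_val_one, Matrix.head_cons, Matrix.cons_val_zero]
  rw [ha, hb, lin_C_mul, ← smul_eq_C_mul, smul_smul, inv_mul_cancel₀ hc, one_smul]

lemma span_eq_of_prop {a1 b1 a2 b2 c : ℂ} (hc : c ≠ 0) (ha : a2 = c*a1) (hb : b2 = c*b1) :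
    Submodule.span ℂ {lin a1 b1} = Submodule.span ℂ {lin a2 b2} := by
  rw [ha, hb, lin_C_mul, ← smul_eq_C_mul]
  exact (Submodule.span_singleton_smul_eq (isUnit_iff_ne_zero.mpr hc) _).symm

lemma not_both_prop {a b p1 q1 p2 q2 c e : ℂ} (hc : c ≠ 0) (he : e ≠ 0)
    (hp1 : p1 = c*a) (hq1 : q1 = c*b) (hp2 : p2 = e*a) (hq2 : q2 = e*b)
    (hmind : LinearIndependent ℂ ![lin p1 q1, lin p2 q2]) : False := by
  apply (linearIndependent_fin2.mp hmind).2 (c/e)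
  show (c/e) • (![lin p1 q1, lin p2 q2] 1) = ![lin p1 q1, lin p2 q2] 0
  simp only [Matrix.cons_val_one, Matrix.head_cons, Matrix.cons_val_zero]
  rw [hp1, hq1, hp2, hq2, lin_C_mul, lin_C_mul, ← smul_eq_C_mul, ← smul_eq_C_mul,
    smul_smul, div_mul_cancel₀ _ he]


end AuxUnique

/-- A binary form of degree `d ≥ 3` which is a direct sum
`F = c₁ ℓ₁^d + c₂ ℓ₂^d` has a uniquely determined decomposition: the unordered pair of
lines `{⟨ℓ₁⟩, ⟨ℓ₂⟩}` is determined by `F`. -/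
theorem binary_direct_sum_unique_decomposition
    (d : ℕ) (hd : 3 ≤ d) (F : MvPolynomial (Fin 2) ℂ)
    (c₁ c₂ c₁' c₂' : ℂ) (ℓ₁ ℓ₂ m₁ m₂ : MvPolynomial (Fin 2) ℂ)
    (hc₁ : c₁ ≠ 0) (hc₂ : c₂ ≠ 0) (hc₁' : c₁' ≠ 0) (hc₂' : c₂' ≠ 0)
    (hℓ₁ : ℓ₁.IsHomogeneous 1) (hℓ₂ : ℓ₂.IsHomogeneous 1)
    (hm₁ : m₁.IsHomogeneous 1) (hm₂ : m₂.IsHomogeneous 1)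
    (hlind : LinearIndependent ℂ ![ℓ₁, ℓ₂]) (hmind : LinearIndependent ℂ ![m₁, m₂])
    (hF₁ : F = c₁ • ℓ₁ ^ d + c₂ • ℓ₂ ^ d) (hF₂ : F = c₁' • m₁ ^ d + c₂' • m₂ ^ d) :
    (Submodule.span ℂ {ℓ₁} = Submodule.span ℂ {m₁} ∧
      Submodule.span ℂ {ℓ₂} = Submodule.span ℂ {m₂}) ∨
    (Submodule.span ℂ {ℓ₁} = Submodule.span ℂ {m₂} ∧
      Submodule.span ℂ {ℓ₂} = Submodule.span ℂ {m₁}) := by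
  obtain ⟨a1, b1, rfl⟩ := rep' hℓ₁
  obtain ⟨a2, b2, rfl⟩ := rep' hℓ₂
  obtain ⟨p1, q1, rfl⟩ := rep' hm₁
  obtain ⟨p2, q2, rfl⟩ := rep' hm₂
  have dL := det_of_indep hlind
  have dM := det_of_indep hmind
  have pL1 := pairL dL
  have pL2 := pairR dL
  have pM1 := pairL dM
  have pM2 := pairR dM
  have heq : C c₁ * (lin a1 b1)^d + C c₂ * (lin a2 b2)^d
      - C c₁' * (lin p1 q1)^d - C c₂' * (lin p2 q2)^d = 0 := by
    have h := hF₁.symm.trans hF₂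
    simp only [smul_eq_C_mul] at h
    linear_combination h
  by_cases h11 : a1*q1 - b1*p1 = 0
  · obtain ⟨c, hc, hp, hq⟩ := prop_of_det_zero pL1 pM1 h11
    left
    have h22 : a2*q2 - b2*p2 = 0 := by
      by_contra h22
      have h12 : a1*q2 - b1*p2 ≠ 0 := by
        intro hz
        obtain ⟨e, he, hp2, hq2⟩ := prop_of_det_zero pL1 pM2 hz
        exact not_both_prop hc he hp hq hp2 hq2 hmind
      have hpow : (lin p1 q1)^d = C c ^ d * (lin a1 b1)^d := by
        rw [hp, hq, lin_C_mul, mul_pow]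
      have h3 : C (c₁ - c₁'*c^d) * (lin a1 b1)^d + C c₂ * (lin a2 b2)^d
          + C (-c₂') * (lin p2 q2)^d = 0 := by
        rw [show (C (c₁ - c₁'*c^d) : S2) = C c₁ - C c₁' * C c ^ d by
          rw [map_sub, map_mul, map_pow], map_neg]
        linear_combination heq + C c₁' * hpow
      exact hc₂ (pow3 (by omega) dL h12 h22 h3).2.1
    obtain ⟨e, he, hp2, hq2⟩ := prop_of_det_zero pL2 pM2 h22
    exact ⟨span_eq_of_prop hc hp hq, span_eq_of_prop he hp2 hq2⟩
  by_cases h12 : a1*q2 - b1*p2 = 0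
  · obtain ⟨c, hc, hp, hq⟩ := prop_of_det_zero pL1 pM2 h12
    right
    have h21 : a2*q1 - b2*p1 = 0 := by
      by_contra h21
      have hpow : (lin p2 q2)^d = C c ^ d * (lin a1 b1)^d := by
        rw [hp, hq, lin_C_mul, mul_pow]
      have h3 : C (c₁ - c₂'*c^d) * (lin a1 b1)^d + C c₂ * (lin a2 b2)^d
          + C (-c₁') * (lin p1 q1)^d = 0 := by
        rw [show (C (c₁ - c₂'*c^d) : S2) = C c₁ - C c₂' * C c ^ d by
          rw [map_sub, map_mul, map_pow], map_neg]
        linear_combination heq + C c₂' * hpow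
      exact hc₂ (pow3 (by omega) dL h11 h21 h3).2.1
    obtain ⟨e, he, hp2, hq2⟩ := prop_of_det_zero pL2 pM1 h21
    exact ⟨span_eq_of_prop hc hp hq, span_eq_of_prop he hp2 hq2⟩
  exfalso
  by_cases h21 : a2*q1 - b2*p1 = 0
  · obtain ⟨c, hc, hp, hq⟩ := prop_of_det_zero pL2 pM1 h21
    have h22 : a2*q2 - b2*p2 ≠ 0 := by
      intro hz
      obtain ⟨e, he, hp2, hq2⟩ := prop_of_det_zero pL2 pM2 hz
      exact not_both_prop hc he hp hq hp2 hq2 hmind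
    have hpow : (lin p1 q1)^d = C c ^ d * (lin a2 b2)^d := by
      rw [hp, hq, lin_C_mul, mul_pow]
    have h3 : C c₁ * (lin a1 b1)^d + C (c₂ - c₁'*c^d) * (lin a2 b2)^d
        + C (-c₂') * (lin p2 q2)^d = 0 := by
      rw [show (C (c₂ - c₁'*c^d) : S2) = C c₂ - C c₁' * C c ^ d by
        rw [map_sub, map_mul, map_pow], map_neg]
      linear_combination heq + C c₁' * hpow
    exact hc₁ (pow3 (by omega) dL h12 h22 h3).1
  by_cases h22 : a2*q2 - b2*p2 = 0
  · obtain ⟨c, hc, hp, hq⟩ := prop_of_det_zero pL2 pM2 h22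
    have hpow : (lin p2 q2)^d = C c ^ d * (lin a2 b2)^d := by
      rw [hp, hq, lin_C_mul, mul_pow]
    have h3 : C c₁ * (lin a1 b1)^d + C (c₂ - c₂'*c^d) * (lin a2 b2)^d
        + C (-c₁') * (lin p1 q1)^d = 0 := by
      rw [show (C (c₂ - c₂'*c^d) : S2) = C c₂ - C c₂' * C c ^ d by
        rw [map_sub, map_mul, map_pow], map_neg]
      linear_combination heq + C c₂' * hpow
    exact hc₁ (pow3 (by omega) dL h11 h21 h3).1
  · have h4 : C c₁ * (lin a1 b1)^d + C c₂ * (lin a2 b2)^d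
        + C (-c₁') * (lin p1 q1)^d + C (-c₂') * (lin p2 q2)^d = 0 := by
      rw [map_neg, map_neg]
      linear_combination heq
    exact hc₁ (pow4 hd dL h11 h12 h21 h22 dM h4).1
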